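/- Let ω be a weight function satisfying ∃ H ≥ 1 ∀ t ≥ 0: 2ω(t) ≤ ω(Ht) + H (condition (ω₆)). Define Ωρ k := (1/k!) exp((1/ρ) φ*(ρ k)) with φ* the Young conjugate of φ(t) = ω(e^t). Then for each ρ > 0 there exists C > 0 with Ω^{2ρ} k ≤ C H^k Ωρ k for all k; in particular Ω^{2ρ} ≼ Ωρ and hence Ωρ ≈ Ωτ for all ρ, τ > 0. -/

import Mathlib

open Filter

/-- The Young conjugate `φ*(t) = sup_{s ≥ 0} (s t − φ(s))`. -/
noncomputable def youngStar (φ : ℝ → ℝ) (t : ℝ) : ℝ :=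
  ⨆ s : {s : ℝ // 0 ≤ s}, ((s : ℝ) * t - φ s)

/-- The associated weight sequence `Ω^ρ_k = (1/k!) exp((1/ρ) φ*(ρ k))`. -/
noncomputable def assocSeq (ω : ℝ → ℝ) (ρ : ℝ) (k : ℕ) : ℝ :=
  (1 / k.factorial) *
    Real.exp ((1 / ρ) * youngStar (fun s => ω (Real.exp s)) (ρ * k))

/-- Superlinear growth: the Young conjugate sup is pointwise bounded. -/
lemma aux_bdd (ω : ℝ → ℝ)
    (hmono : MonotoneOn ω (Set.Ici (0 : ℝ)))
    (hnonneg : ∀ t, 0 ≤ t → 0 ≤ ω t)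
    (hlim : Tendsto ω atTop atTop)
    (H : ℝ) (hH1 : 1 < H)
    (hω6 : ∀ t, 0 ≤ t → 2 * ω t ≤ ω (H * t) + H)
    (t : ℝ) (ht : 0 ≤ t) :
    ∃ B : ℝ, ∀ s, 0 ≤ s → s * t - ω (Real.exp s) ≤ B := by
  have hH0 : (0:ℝ) < H := lt_trans one_pos hH1
  set L := Real.log H with hL
  have hL0 : 0 < L := Real.log_pos hH1
  have hφ0 : ∀ s : ℝ, 0 ≤ ω (Real.exp s) := fun s => hnonneg _ (Real.exp_pos s).le
  have hφmono : ∀ a b : ℝ, a ≤ b → ω (Real.exp a) ≤ ω (Real.exp b) := fun a b hab =>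
    hmono (Set.mem_Ici.2 (Real.exp_pos a).le) (Set.mem_Ici.2 (Real.exp_pos b).le)
      (Real.exp_le_exp.2 hab)
  have hφ6 : ∀ s : ℝ, 2 * ω (Real.exp s) ≤ ω (Real.exp (s + L)) + H := by
    intro s
    have h := hω6 (Real.exp s) (Real.exp_pos s).le
    have h2 : Real.exp (s+L) = H * Real.exp s := by
      rw [Real.exp_add, hL, Real.exp_log hH0]; ring
    rw [h2]; exact h
  obtain ⟨T, hT⟩ := eventually_atTop.mp (hlim.eventually_ge_atTop (2*H))
  set s₁ := Real.log (max 1 T) with hs₁def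
  have hs₁0 : 0 ≤ s₁ := Real.log_nonneg (le_max_left _ _)
  have hs₁ : 2*H ≤ ω (Real.exp s₁) := by
    rw [hs₁def, Real.exp_log (lt_of_lt_of_le one_pos (le_max_left 1 T))]
    exact hT _ (le_max_right 1 T)
  have hgrow : ∀ n : ℕ, 2^n * H + H ≤ ω (Real.exp (s₁ + n * L)) := by
    intro n
    induction n with
    | zero =>
        simp only [pow_zero, Nat.cast_zero, zero_mul, add_zero, one_mul]
        linarith
    | succ n ih =>
        have h6 := hφ6 (s₁ + n * L)
        have heq : s₁ + (n:ℝ) * L + L = s₁ + ((n:ℕ)+1 : ℕ) * L := by push_cast; ring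
        rw [heq] at h6
        have : (2:ℝ)^((n:ℕ)+1) = 2 * 2^n := by rw [pow_succ]; ring
        rw [this]
        linarith
  obtain ⟨m, hm⟩ := pow_unbounded_of_one_lt (t*L) (one_lt_two : (1:ℝ) < 2)
  refine ⟨t * (s₁ + m * L), fun s hs => ?_⟩
  rcases le_or_gt s s₁ with hss | hss
  · have h1 : s * t ≤ s₁ * t := mul_le_mul_of_nonneg_right hss ht
    have h2 := hφ0 s
    have h3 : 0 ≤ t * ((m:ℝ) * L) :=
      mul_nonneg ht (mul_nonneg (Nat.cast_nonneg m) hL0.le)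
    nlinarith
  · set n := ⌊(s - s₁)/L⌋₊ with hn
    have hns : s₁ + n * L ≤ s := by
      have h1 : (n:ℝ) ≤ (s - s₁)/L := Nat.floor_le (div_nonneg (by linarith) hL0.le)
      have := (le_div_iff₀ hL0).mp h1
      linarith
    have hsn : s ≤ s₁ + ((n:ℝ)+1)*L := by
      have h2 : (s - s₁)/L < (n:ℝ) + 1 := Nat.lt_floor_add_one _
      have := (div_lt_iff₀ hL0).mp h2
      linarith
    have hφs : (2:ℝ)^n ≤ ω (Real.exp s) := by
      have h1 := hgrow n
      have h2 := hφmono _ _ hns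
      have h3 : (2:ℝ)^n ≤ 2^n * H := le_mul_of_one_le_right (by positivity) hH1.le
      linarith
    have key : t * (((n:ℝ)+1) * L) ≤ t * ((m:ℝ) * L) + 2^n := by
      rcases le_or_gt ((n:ℕ)+1) m with hnm | hnm
      · have h1 : ((n:ℝ)+1) ≤ (m:ℝ) := by exact_mod_cast hnm
        have h2 : t * (((n:ℝ)+1) * L) ≤ t * ((m:ℝ) * L) := by
          apply mul_le_mul_of_nonneg_left _ ht
          exact mul_le_mul_of_nonneg_right h1 hL0.le
        have h3 : (0:ℝ) ≤ 2^n := by positivity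
        linarith
      · have hmn : m ≤ n := Nat.lt_succ_iff.mp hnm
        have hc : ((n:ℝ) - m + 1) ≤ (2:ℝ)^(n-m) := by
          have := Nat.lt_two_pow_self (n := n-m)
          have h := (Nat.succ_le_of_lt this)
          have : ((n-m:ℕ):ℝ) + 1 ≤ (2:ℝ)^(n-m) := by exact_mod_cast h
          rwa [Nat.cast_sub hmn] at this
        have hpow : (2:ℝ)^m * (2:ℝ)^(n-m) = 2^n := by
          rw [← pow_add, Nat.add_sub_cancel' hmn]
        have h1 : t*L*((n:ℝ)+1-m) ≤ 2^m * ((n:ℝ)+1-m) := by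
          apply mul_le_mul_of_nonneg_right hm.le
          have : (m:ℝ) ≤ n := by exact_mod_cast hmn
          linarith
        have h2 : (2:ℝ)^m * ((n:ℝ)+1-m) ≤ 2^m * 2^(n-m) := by
          apply mul_le_mul_of_nonneg_left _ (by positivity)
          linarith
        have htL : 0 ≤ t*L := mul_nonneg ht hL0.le
        have h3 : 0 ≤ t*L*(m:ℝ) := mul_nonneg htL (Nat.cast_nonneg m)
        nlinarith
    have h5 := mul_le_mul_of_nonneg_right hsn ht
    nlinarith

section Main

variable (ω : ℝ → ℝ)
    (hmono : MonotoneOn ω (Set.Ici (0 : ℝ)))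
    (hnonneg : ∀ t, 0 ≤ t → 0 ≤ ω t)
    (hzero : ∀ t ∈ Set.Icc (0 : ℝ) 1, ω t = 0)
    (hlim : Tendsto ω atTop atTop)
    (H : ℝ) (hH1 : 1 < H)
    (hω6 : ∀ t, 0 ≤ t → 2 * ω t ≤ ω (H * t) + H)

include hmono hnonneg hlim hH1 hω6

/-- elements are below the Young conjugate. -/
lemma aux_le_star (t : ℝ) (ht : 0 ≤ t) (s : ℝ) (hs : 0 ≤ s) :
    s * t - ω (Real.exp s) ≤ youngStar (fun s => ω (Real.exp s)) t := by
  obtain ⟨B, hB⟩ := aux_bdd ω hmono hnonneg hlim H hH1 hω6 t ht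
  have hBdd : BddAbove (Set.range fun s : {s : ℝ // 0 ≤ s} =>
      ((s:ℝ) * t - ω (Real.exp (s:ℝ)))) := by
    refine ⟨B, ?_⟩
    rintro x ⟨⟨s', hs'⟩, rfl⟩
    exact hB s' hs'
  exact le_ciSup hBdd ⟨s, hs⟩

include hzero in
lemma aux_star_nonneg (t : ℝ) (ht : 0 ≤ t) :
    0 ≤ youngStar (fun s => ω (Real.exp s)) t := by
  have h := aux_le_star ω hmono hnonneg hlim H hH1 hω6 t ht 0 le_rfl
  have h0 : ω (Real.exp 0) = 0 := by
    rw [Real.exp_zero]; exact hzero 1 ⟨zero_le_one, le_rfl⟩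
  rw [h0] at h; linarith

include hzero in
/-- Key doubling inequality: `φ*(2t) ≤ 2 φ*(t) + 2 t log H + H`. -/
lemma aux_double (t : ℝ) (ht : 0 ≤ t) :
    youngStar (fun s => ω (Real.exp s)) (2*t) ≤
      2 * youngStar (fun s => ω (Real.exp s)) t + 2*t*Real.log H + H := by
  have hH0 : (0:ℝ) < H := lt_trans one_pos hH1
  set L := Real.log H with hL
  have hL0 : 0 < L := Real.log_pos hH1
  have hstar0 := aux_star_nonneg ω hmono hnonneg hzero hlim H hH1 hω6 t ht
  apply ciSup_le
  rintro ⟨s, hs⟩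
  show s * (2*t) - ω (Real.exp s) ≤ _
  rcases le_or_gt L s with hLs | hLs
  · have h6 := hω6 (Real.exp (s - L)) (Real.exp_pos _).le
    have h2 : H * Real.exp (s - L) = Real.exp s := by
      rw [← Real.exp_log hH0, ← Real.exp_add, ← hL]; ring_nf
    rw [h2] at h6
    have hle := aux_le_star ω hmono hnonneg hlim H hH1 hω6 t ht (s - L) (by linarith)
    nlinarith
  · have h1 : s * (2*t) ≤ L * (2*t) := mul_le_mul_of_nonneg_right hLs.le (by linarith)
    have h2 := hnonneg (Real.exp s) (Real.exp_pos s).le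
    nlinarith

end Main

lemma aux_pos (ω : ℝ → ℝ) (ρ : ℝ) (k : ℕ) : 0 < assocSeq ω ρ k := by
  unfold assocSeq
  have : (0:ℝ) < k.factorial := by exact_mod_cast k.factorial_pos
  positivity

section Main2

variable (ω : ℝ → ℝ)
    (hmono : MonotoneOn ω (Set.Ici (0 : ℝ)))
    (hnonneg : ∀ t, 0 ≤ t → 0 ≤ ω t)
    (hzero : ∀ t ∈ Set.Icc (0 : ℝ) 1, ω t = 0)
    (hlim : Tendsto ω atTop atTop)
    (H : ℝ) (hH1 : 1 < H)
    (hω6 : ∀ t, 0 ≤ t → 2 * ω t ≤ ω (H * t) + H)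

include hmono hnonneg hzero hlim hH1 hω6

lemma aux_part1 (ρ : ℝ) (hρ : 0 < ρ) (k : ℕ) :
    assocSeq ω (2*ρ) k ≤ Real.exp (H/(2*ρ)) * H ^ k * assocSeq ω ρ k := by
  have hH0 : (0:ℝ) < H := lt_trans one_pos hH1
  set L := Real.log H with hL
  set Y := youngStar (fun s => ω (Real.exp s)) (ρ * k) with hY
  have hd := aux_double ω hmono hnonneg hzero hlim H hH1 hω6 (ρ * k)
    (by positivity)
  have harg : (2*ρ) * (k:ℝ) = 2 * (ρ * k) := by ring
  have hscal : (1/(2*ρ)) * youngStar (fun s => ω (Real.exp s)) (2*(ρ*k)) ≤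
      H/(2*ρ) + (k:ℝ)*L + (1/ρ) * Y := by
    calc (1/(2*ρ)) * youngStar (fun s => ω (Real.exp s)) (2*(ρ*k))
        ≤ (1/(2*ρ)) * (2*Y + 2*(ρ*(k:ℝ))*L + H) :=
          mul_le_mul_of_nonneg_left hd (by positivity)
      _ = H/(2*ρ) + (k:ℝ)*L + (1/ρ) * Y := by field_simp; ring
  unfold assocSeq
  rw [harg]
  have hexp : Real.exp ((1/(2*ρ)) * youngStar (fun s => ω (Real.exp s)) (2*(ρ*k))) ≤
      Real.exp (H/(2*ρ)) * H ^ k * Real.exp ((1/ρ) * Y) := by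
    have h1 := Real.exp_le_exp.2 hscal
    rw [Real.exp_add, Real.exp_add] at h1
    rwa [Real.exp_nat_mul, hL, Real.exp_log hH0] at h1
  have hfac : (0:ℝ) ≤ 1 / k.factorial := by positivity
  calc (1 / (k.factorial:ℝ)) * Real.exp ((1/(2*ρ)) * youngStar (fun s => ω (Real.exp s)) (2*(ρ*k)))
      ≤ (1 / (k.factorial:ℝ)) * (Real.exp (H/(2*ρ)) * H ^ k * Real.exp ((1/ρ) * Y)) :=
        mul_le_mul_of_nonneg_left hexp hfac
    _ = Real.exp (H/(2*ρ)) * H ^ k * ((1 / (k.factorial:ℝ)) * Real.exp ((1/ρ) * Y)) := by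
        ring

lemma aux_mono (ρ τ : ℝ) (hρ : 0 < ρ) (hτ : 0 < τ) (hρτ : ρ ≤ τ) (k : ℕ) :
    assocSeq ω ρ k ≤ assocSeq ω τ k := by
  have hφ0 : ∀ s : ℝ, 0 ≤ ω (Real.exp s) := fun s => hnonneg _ (Real.exp_pos s).le
  have hstar : youngStar (fun s => ω (Real.exp s)) (ρ * k) ≤
      (ρ/τ) * youngStar (fun s => ω (Real.exp s)) (τ * k) := by
    apply ciSup_le
    rintro ⟨s, hs⟩
    show s * (ρ * k) - ω (Real.exp s) ≤ _
    have hle := aux_le_star ω hmono hnonneg hlim H hH1 hω6 (τ * k)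
      (by positivity) s hs
    have h1 : s * (ρ * k) - ω (Real.exp s) ≤ (ρ/τ) * (s * (τ * k) - ω (Real.exp s)) := by
      rw [div_mul_eq_mul_div, le_div_iff₀ hτ]
      have := mul_le_mul_of_nonneg_right (hφ0 s) (sub_nonneg.2 hρτ)
      nlinarith [hφ0 s]
    calc s * (ρ * k) - ω (Real.exp s)
        ≤ (ρ/τ) * (s * (τ * k) - ω (Real.exp s)) := h1
      _ ≤ (ρ/τ) * youngStar (fun s => ω (Real.exp s)) (τ * k) :=
          mul_le_mul_of_nonneg_left hle (by positivity)
  have hscal : (1/ρ) * youngStar (fun s => ω (Real.exp s)) (ρ * k) ≤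
      (1/τ) * youngStar (fun s => ω (Real.exp s)) (τ * k) := by
    calc (1/ρ) * youngStar (fun s => ω (Real.exp s)) (ρ * k)
        ≤ (1/ρ) * ((ρ/τ) * youngStar (fun s => ω (Real.exp s)) (τ * k)) :=
          mul_le_mul_of_nonneg_left hstar (by positivity)
      _ = (1/τ) * youngStar (fun s => ω (Real.exp s)) (τ * k) := by
          field_simp
  unfold assocSeq
  exact mul_le_mul_of_nonneg_left (Real.exp_le_exp.2 hscal) (by positivity)

lemma aux_iter (ρ : ℝ) (hρ : 0 < ρ) (n : ℕ) :
    ∃ C : ℝ, 0 < C ∧ ∀ k : ℕ,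
      assocSeq ω (2^n * ρ) k ≤ C * (H^n) ^ k * assocSeq ω ρ k := by
  have hH0 : (0:ℝ) < H := lt_trans one_pos hH1
  induction n with
  | zero =>
      exact ⟨1, one_pos, fun k => by rw [pow_zero, one_mul, pow_zero, one_pow, mul_one, one_mul]⟩
  | succ n ih =>
      obtain ⟨C, hC, hrec⟩ := ih
      refine ⟨Real.exp (H/(2*(2^n*ρ))) * C, by positivity, fun k => ?_⟩
      have hρn : (0:ℝ) < 2^n * ρ := by positivity
      have h1 := aux_part1 ω hmono hnonneg hzero hlim H hH1 hω6 (2^n*ρ) hρn k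
      have harg : (2:ℝ)^(n+1) * ρ = 2 * (2^n * ρ) := by ring
      rw [harg]
      calc assocSeq ω (2*(2^n*ρ)) k
          ≤ Real.exp (H/(2*(2^n*ρ))) * H ^ k * assocSeq ω (2^n*ρ) k := h1
        _ ≤ Real.exp (H/(2*(2^n*ρ))) * H ^ k * (C * (H^n) ^ k * assocSeq ω ρ k) := by
            apply mul_le_mul_of_nonneg_left (hrec k) (by positivity)
        _ = Real.exp (H/(2*(2^n*ρ))) * C * (H^(n+1)) ^ k * assocSeq ω ρ k := by
            rw [pow_succ]
            rw [mul_pow]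
            ring

end Main2

theorem omega6_assocSeq_equiv (ω : ℝ → ℝ)
    (hcont : ContinuousOn ω (Set.Ici (0 : ℝ)))
    (hmono : MonotoneOn ω (Set.Ici (0 : ℝ)))
    (hnonneg : ∀ t, 0 ≤ t → 0 ≤ ω t)
    (hzero : ∀ t ∈ Set.Icc (0 : ℝ) 1, ω t = 0)
    (hlim : Tendsto ω atTop atTop)
    (hconv : ConvexOn ℝ (Set.Ici (0 : ℝ)) (fun t => ω (Real.exp t)))
    (H : ℝ) (hH : 1 ≤ H)
    (hω6 : ∀ t, 0 ≤ t → 2 * ω t ≤ ω (H * t) + H) :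
    (∀ ρ : ℝ, 0 < ρ → ∃ C : ℝ, 0 < C ∧
      ∀ k : ℕ, assocSeq ω (2 * ρ) k ≤ C * H ^ k * assocSeq ω ρ k) ∧
    (∀ ρ τ : ℝ, 0 < ρ → 0 < τ →
      (∃ C ρ₀ : ℝ, 0 < C ∧ 0 < ρ₀ ∧
        ∀ k, assocSeq ω ρ k ≤ C * ρ₀ ^ k * assocSeq ω τ k) ∧
      (∃ C ρ₀ : ℝ, 0 < C ∧ 0 < ρ₀ ∧
        ∀ k, assocSeq ω τ k ≤ C * ρ₀ ^ k * assocSeq ω ρ k)) := by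
  have hH1 : 1 < H := by
    rcases lt_or_eq_of_le hH with h | h
    · exact h
    · exfalso
      obtain ⟨u, hu1, hu2⟩ :=
        ((hlim.eventually_ge_atTop 2).and (eventually_ge_atTop (0:ℝ))).exists
      have := hω6 u hu2
      rw [← h, one_mul] at this
      linarith
  have hH0 : (0:ℝ) < H := lt_trans one_pos hH1
  have hcomp : ∀ ρ τ : ℝ, 0 < ρ → 0 < τ →
      ∃ C ρ₀ : ℝ, 0 < C ∧ 0 < ρ₀ ∧
        ∀ k, assocSeq ω ρ k ≤ C * ρ₀ ^ k * assocSeq ω τ k := by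
    intro ρ τ hρ hτ
    obtain ⟨n, hn⟩ := pow_unbounded_of_one_lt (ρ/τ) (one_lt_two : (1:ℝ) < 2)
    have hρτ : ρ ≤ 2^n * τ := by
      rw [div_lt_iff₀ hτ] at hn
      linarith
    obtain ⟨C, hC, hiter⟩ := aux_iter ω hmono hnonneg hzero hlim H hH1 hω6 τ hτ n
    refine ⟨C, H^n, hC, by positivity, fun k => ?_⟩
    calc assocSeq ω ρ k
        ≤ assocSeq ω (2^n * τ) k :=
          aux_mono ω hmono hnonneg hzero hlim H hH1 hω6 ρ (2^n*τ) hρ (by positivity) hρτ k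
      _ ≤ C * (H^n) ^ k * assocSeq ω τ k := hiter k
  constructor
  · intro ρ hρ
    exact ⟨Real.exp (H/(2*ρ)), Real.exp_pos _,
      aux_part1 ω hmono hnonneg hzero hlim H hH1 hω6 ρ hρ⟩
  · intro ρ τ hρ hτ
    exact ⟨hcomp ρ τ hρ hτ, hcomp τ ρ hτ hρ⟩
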